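/- For every n ≥ 1, the number of permutations π ∈ S_n that avoid both generalized patterns 1-23 and 1-32 and satisfy π_n = 1 equals I_{n-1}, the number of involutions in S_{n-1}. -/

import Mathlib

/-- `π` avoids the generalized pattern 1-23. -/
def Avoids1d23 {n : ℕ} (π : Equiv.Perm (Fin n)) : Prop :=
  ¬ ∃ (i j : Fin n) (h : j.1 + 1 < n), i < j ∧ π i < π j ∧ π j < π ⟨j.1 + 1, h⟩

/-- `π` avoids the generalized pattern 1-32. -/
def Avoids1d32 {n : ℕ} (π : Equiv.Perm (Fin n)) : Prop :=
  ¬ ∃ (i j : Fin n) (h : j.1 + 1 < n), i < j ∧ π i < π ⟨j.1 + 1, h⟩ ∧ π ⟨j.1 + 1, h⟩ < π j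

/-- The number of involutions in the symmetric group `S m`. -/
noncomputable def invCount (m : ℕ) : ℕ := Nat.card {σ : Equiv.Perm (Fin m) // σ * σ = 1}

namespace CE

open Finset

variable {m : ℕ}

/-- `p` is a position of a left-to-right minimum of `π`. -/
def IsLMin (π : Equiv.Perm (Fin (m+1))) (p : Fin (m+1)) : Prop :=
  ∀ q, q < p → π p < π q

instance (π : Equiv.Perm (Fin (m+1))) (p : Fin (m+1)) : Decidable (IsLMin π p) := by
  unfold IsLMin; infer_instance

/-- Structural reformulation of avoiding both patterns with last entry 0. -/
def Valid (π : Equiv.Perm (Fin (m+1))) : Prop :=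
  π ⟨m, Nat.lt_succ_self m⟩ = 0 ∧
    ∀ p : Fin (m+1), ¬ IsLMin π p →
      IsLMin π ⟨p.1 - 1, lt_of_le_of_lt (Nat.sub_le _ _) p.isLt⟩

lemma min_zero (π : Equiv.Perm (Fin (m+1))) : IsLMin π 0 := by
  intro q hq; exact absurd hq (Fin.not_lt_zero q)

lemma min_of_val_zero {π : Equiv.Perm (Fin (m+1))} {p : Fin (m+1)} (h : p.1 = 0) :
    IsLMin π p := by
  intro q hq
  have : q.1 < p.1 := hq
  omega

lemma lt_of_le_ne {π : Equiv.Perm (Fin (m+1))} {a b : Fin (m+1)}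
    (h : π a ≤ π b) (hne : a ≠ b) : π a < π b :=
  lt_of_le_of_ne h (fun hc => hne (π.injective hc))

theorem char (π : Equiv.Perm (Fin (m+1))) :
    (Avoids1d23 π ∧ Avoids1d32 π) ↔
      ∀ p : Fin (m+1), ¬ IsLMin π p →
        IsLMin π ⟨p.1 - 1, lt_of_le_of_lt (Nat.sub_le _ _) p.isLt⟩ := by
  constructor
  · rintro ⟨h23, h32⟩ p hp
    by_cases hp1 : p.1 ≤ 1
    · exact min_of_val_zero (show p.1 - 1 = 0 by omega)
    · push_neg at hp1
      set j : Fin (m+1) := ⟨p.1 - 1, lt_of_le_of_lt (Nat.sub_le _ _) p.isLt⟩ with hjdef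
      have hjval : j.1 = p.1 - 1 := rfl
      by_contra hm
      unfold IsLMin at hm
      push_neg at hm
      obtain ⟨i₀, hi₀j, hi₀⟩ := hm
      have hi₀' : π i₀ < π j := lt_of_le_ne hi₀ (ne_of_lt hi₀j)
      have hpj : (⟨j.1 + 1, by omega⟩ : Fin (m+1)) = p := by
        apply Fin.ext; show j.1 + 1 = p.1; omega
      have key : ∀ i : Fin (m+1), i < j →
          ¬(π i < π j ∧ π j < π p) ∧ ¬(π i < π p ∧ π p < π j) := by
        intro i hij
        constructor
        · intro ⟨a, b⟩
          exact h23 ⟨i, j, by omega, hij, a, by rwa [hpj]⟩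
        · intro ⟨a, b⟩
          exact h32 ⟨i, j, by omega, hij, by rwa [hpj], by rwa [hpj]⟩
      have hjp : j ≠ p := by
        intro hc
        have : j.1 = p.1 := congrArg Fin.val hc
        omega
      have h1 : π p < π j := by
        have hk := (key i₀ hi₀j).1
        have : ¬ π j < π p := fun hc => hk ⟨hi₀', hc⟩
        exact lt_of_le_ne (le_of_not_gt this) (Ne.symm hjp)
      have h2 : π p < π i₀ := by
        have hk := (key i₀ hi₀j).2
        have hip : i₀ ≠ p := by
          intro hc
          have h3 : i₀.1 < j.1 := hi₀j
          have : i₀.1 = p.1 := congrArg Fin.val hc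
          omega
        have : ¬ π i₀ < π p := fun hc => hk ⟨hc, h1⟩
        exact lt_of_le_ne (le_of_not_gt this) (Ne.symm hip)
      apply hp
      intro q hq
      rcases lt_trichotomy q j with hqj | hqj | hqj
      · have hk := (key q hqj).2
        have hqp : q ≠ p := ne_of_lt hq
        have : ¬ π q < π p := fun hc => hk ⟨hc, h1⟩
        exact lt_of_le_ne (le_of_not_gt this) (Ne.symm hqp)
      · rw [hqj]; exact h1
      · exfalso
        have ha : q.1 < p.1 := hq
        have hb : j.1 < q.1 := hqj
        omega
  · intro h
    have main : ∀ (i j : Fin (m+1)) (hj : j.1 + 1 < m + 1), i < j →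
        π i < π j ∧ π j < π ⟨j.1 + 1, hj⟩ ∨
        π i < π ⟨j.1 + 1, hj⟩ ∧ π ⟨j.1 + 1, hj⟩ < π j → False := by
      rintro i j hj hij hcase
      set jp : Fin (m+1) := ⟨j.1 + 1, hj⟩ with hjpdef
      have hijp : i < jp := by
        have : i.1 < j.1 := hij
        show i.1 < j.1 + 1
        omega
      have hipjp : π i < π jp := by
        rcases hcase with ⟨a, b⟩ | ⟨a, b⟩
        · exact a.trans b
        · exact a
      have hnm : ¬ IsLMin π jp := fun hmin => absurd hipjp (not_lt_of_gt (hmin i hijp))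
      have hmn := h jp hnm
      have hje : (⟨jp.1 - 1, lt_of_le_of_lt (Nat.sub_le _ _) jp.isLt⟩ : Fin (m+1)) = j := by
        apply Fin.ext; show j.1 + 1 - 1 = j.1; omega
      rw [hje] at hmn
      have := hmn i hij
      rcases hcase with ⟨a, _⟩ | ⟨a, b⟩
      · exact absurd a (not_lt_of_gt this)
      · exact absurd (a.trans b) (not_lt_of_gt this)
    constructor
    · rintro ⟨i, j, hj, hij, h1, h2⟩
      exact main i j hj hij (Or.inl ⟨h1, h2⟩)
    · rintro ⟨i, j, hj, hij, h1, h2⟩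
      exact main i j hj hij (Or.inr ⟨h1, h2⟩)


/-! ### From involutions to valid permutations -/

/-- number of `z` whose pair-minimum exceeds `x` -/
def cnt (f : Fin m → Fin m) (x : Fin m) : ℕ :=
  (univ.filter fun z => x < z ∧ x < f z).card

lemma cnt_lt (f : Fin m → Fin m) (x : Fin m) : cnt f x < m := by
  have hsub : (univ.filter fun z => x < z ∧ x < f z) ⊆ univ.erase x := by
    intro z hz
    simp only [mem_filter] at hz
    exact mem_erase.2 ⟨ne_of_gt hz.2.1, mem_univ z⟩
  have := card_le_card hsub
  rw [card_erase_of_mem (mem_univ x), Finset.card_univ, Fintype.card_fin] at this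
  have hm : 0 < m := x.pos
  unfold cnt
  omega

lemma cnt_pair_le (σ : Equiv.Perm (Fin m)) (hσ : ∀ x, σ (σ x) = x)
    {x : Fin m} (hx : σ x < x) : cnt (⇑σ) (σ x) + 2 ≤ m := by
  have hne : x ≠ σ x := ne_of_gt hx
  have hsub : (univ.filter fun z => σ x < z ∧ σ x < σ z) ⊆ (univ.erase x).erase (σ x) := by
    intro z hz
    simp only [mem_filter] at hz
    apply mem_erase.2
    constructor
    · rintro rfl; exact absurd hz.2.1 (lt_irrefl _)
    · apply mem_erase.2
      refine ⟨?_, mem_univ z⟩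
      rintro rfl
      exact absurd hz.2.2 (lt_irrefl _)
  have := card_le_card hsub
  rw [card_erase_of_mem (mem_erase.2 ⟨(Ne.symm hne), mem_univ _⟩),
    card_erase_of_mem (mem_univ x), Finset.card_univ, Fintype.card_fin] at this
  have hm2 : 2 ≤ m := by
    have h1 : (σ x).1 < x.1 := hx
    have h2 := x.isLt
    omega
  unfold cnt
  omega

lemma cnt_strict (σ : Equiv.Perm (Fin m)) {x y : Fin m} (hxy : x < y) (hy : y ≤ σ y) :
    cnt (⇑σ) y < cnt (⇑σ) x := by
  apply card_lt_card
  rw [Finset.ssubset_iff_of_subset]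
  · exact ⟨y, mem_filter.2 ⟨mem_univ _, hxy, lt_of_lt_of_le hxy hy⟩,
      fun hc => absurd (mem_filter.1 hc).2.1 (lt_irrefl _)⟩
  · intro z hz
    simp only [mem_filter] at hz ⊢
    exact ⟨mem_univ _, hxy.trans hz.2.1, hxy.trans hz.2.2⟩

lemma cnt_two (σ : Equiv.Perm (Fin m)) (hσ : ∀ x, σ (σ x) = x)
    {x w : Fin m} (hxw : x < w) (hw : w < σ w) :
    cnt (⇑σ) w + 2 ≤ cnt (⇑σ) x := by
  have h1 : insert w (insert (σ w) (univ.filter fun z => w < z ∧ w < σ z)) ⊆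
      (univ.filter fun z => x < z ∧ x < σ z) := by
    intro z hz
    simp only [mem_insert, mem_filter] at hz ⊢
    rcases hz with rfl | rfl | hz
    · exact ⟨mem_univ _, hxw, hxw.trans hw⟩
    · refine ⟨mem_univ _, hxw.trans hw, ?_⟩
      rw [hσ]; exact hxw
    · exact ⟨mem_univ _, hxw.trans hz.2.1, hxw.trans hz.2.2⟩
  have h2 : w ∉ insert (σ w) (univ.filter fun z => w < z ∧ w < σ z) := by
    simp only [mem_insert, mem_filter]
    rintro (hc | ⟨-, hc, -⟩)
    · exact absurd hc (ne_of_lt hw)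
    · exact absurd hc (lt_irrefl _)
  have h3 : σ w ∉ (univ.filter fun z => w < z ∧ w < σ z) := by
    simp only [mem_filter]
    rintro ⟨-, -, hc⟩
    rw [hσ] at hc
    exact absurd hc (lt_irrefl _)
  have := card_le_card h1
  rw [card_insert_of_notMem h2, card_insert_of_notMem h3] at this
  unfold cnt
  omega

lemma cnt_inj (σ : Equiv.Perm (Fin m)) {x y : Fin m} (hx : x ≤ σ x) (hy : y ≤ σ y)
    (h : cnt (⇑σ) x = cnt (⇑σ) y) : x = y := by
  rcases lt_trichotomy x y with hc | hc | hc
  · have := cnt_strict σ hc hy; omega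
  · exact hc
  · have := cnt_strict σ hc hx; omega

/-- the position of each value in the permutation associated to `σ` -/
def posOf (σ : Equiv.Perm (Fin m)) (v : Fin (m+1)) : Fin (m+1) :=
  Fin.cases ⟨m, Nat.lt_succ_self m⟩
    (fun x => if x ≤ σ x then ⟨cnt (⇑σ) x, lt_trans (cnt_lt (⇑σ) x) (Nat.lt_succ_self m)⟩
      else ⟨cnt (⇑σ) (σ x) + 1, by have := cnt_lt (⇑σ) (σ x); omega⟩) v

@[simp] lemma posOf_zero (σ : Equiv.Perm (Fin m)) : posOf σ 0 = ⟨m, Nat.lt_succ_self m⟩ := by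
  unfold posOf; simp

lemma posOf_succ_low (σ : Equiv.Perm (Fin m)) {x : Fin m} (hx : x ≤ σ x) :
    posOf σ x.succ = ⟨cnt (⇑σ) x, lt_trans (cnt_lt (⇑σ) x) (Nat.lt_succ_self m)⟩ := by
  unfold posOf; simp [hx]

lemma posOf_succ_high (σ : Equiv.Perm (Fin m)) {x : Fin m} (hx : ¬ x ≤ σ x) :
    posOf σ x.succ = ⟨cnt (⇑σ) (σ x) + 1, by have := cnt_lt (⇑σ) (σ x); omega⟩ := by
  unfold posOf; simp [hx]

lemma posOf_injective (σ : Equiv.Perm (Fin m)) (hσ : ∀ x, σ (σ x) = x) :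
    Function.Injective (posOf σ) := by
  intro v w h
  induction v using Fin.cases with
  | zero =>
    induction w using Fin.cases with
    | zero => rfl
    | succ y =>
      exfalso
      rw [posOf_zero] at h
      by_cases hy : y ≤ σ y
      · rw [posOf_succ_low σ hy] at h
        have hval : m = cnt (⇑σ) y := congrArg Fin.val h
        have := cnt_lt (⇑σ) y
        omega
      · rw [posOf_succ_high σ hy] at h
        have hval : m = cnt (⇑σ) (σ y) + 1 := congrArg Fin.val h
        push_neg at hy
        have := cnt_pair_le σ hσ hy
        omega
  | succ x =>
    induction w using Fin.cases with
    | zero =>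
      exfalso
      rw [posOf_zero] at h
      by_cases hx : x ≤ σ x
      · rw [posOf_succ_low σ hx] at h
        have hval : cnt (⇑σ) x = m := congrArg Fin.val h
        have := cnt_lt (⇑σ) x
        omega
      · rw [posOf_succ_high σ hx] at h
        have hval : cnt (⇑σ) (σ x) + 1 = m := congrArg Fin.val h
        push_neg at hx
        have := cnt_pair_le σ hσ hx
        omega
    | succ y =>
      by_cases hx : x ≤ σ x <;> by_cases hy : y ≤ σ y
      · rw [posOf_succ_low σ hx, posOf_succ_low σ hy] at h
        have hval : cnt (⇑σ) x = cnt (⇑σ) y := congrArg Fin.val h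
        rw [cnt_inj σ hx hy hval]
      · rw [posOf_succ_low σ hx, posOf_succ_high σ hy] at h
        exfalso
        push_neg at hy
        have hval : cnt (⇑σ) x = cnt (⇑σ) (σ y) + 1 := congrArg Fin.val h
        have hwp : σ y < σ (σ y) := by rw [hσ]; exact hy
        rcases lt_trichotomy x (σ y) with hc | hc | hc
        · have := cnt_two σ hσ hc hwp
          omega
        · rw [hc] at hval; omega
        · have := cnt_strict σ hc hx
          omega
      · rw [posOf_succ_high σ hx, posOf_succ_low σ hy] at h
        exfalso
        push_neg at hx
        have hval : cnt (⇑σ) (σ x) + 1 = cnt (⇑σ) y := congrArg Fin.val h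
        have hwp : σ x < σ (σ x) := by rw [hσ]; exact hx
        rcases lt_trichotomy y (σ x) with hc | hc | hc
        · have := cnt_two σ hσ hc hwp
          omega
        · rw [hc] at hval; omega
        · have := cnt_strict σ hc hy
          omega
      · rw [posOf_succ_high σ hx, posOf_succ_high σ hy] at h
        push_neg at hx hy
        have hval : cnt (⇑σ) (σ x) + 1 = cnt (⇑σ) (σ y) + 1 := congrArg Fin.val h
        have hval' : cnt (⇑σ) (σ x) = cnt (⇑σ) (σ y) := by omega
        have h1 : σ x ≤ σ (σ x) := by rw [hσ]; exact le_of_lt hx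
        have h2 : σ y ≤ σ (σ y) := by rw [hσ]; exact le_of_lt hy
        have hxy := cnt_inj σ h1 h2 hval'
        have hxy2 : σ (σ x) = σ (σ y) := congrArg σ hxy
        rw [hσ, hσ] at hxy2
        rw [hxy2]

/-- the valid permutation associated to an involution -/
noncomputable def FPerm (σ : Equiv.Perm (Fin m)) (hσ : ∀ x, σ (σ x) = x) :
    Equiv.Perm (Fin (m+1)) :=
  (Equiv.ofBijective (posOf σ)
    ((Finite.injective_iff_bijective).1 (posOf_injective σ hσ))).symm

variable (σ : Equiv.Perm (Fin m)) (hσ : ∀ x, σ (σ x) = x)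

lemma FPerm_symm_apply (v : Fin (m+1)) : (FPerm σ hσ).symm v = posOf σ v := rfl

lemma FPerm_posOf (v : Fin (m+1)) : FPerm σ hσ (posOf σ v) = v := by
  have h : posOf σ v = (FPerm σ hσ).symm v := rfl
  rw [h, Equiv.apply_symm_apply]

lemma posOf_FPerm (p : Fin (m+1)) : posOf σ (FPerm σ hσ p) = p := by
  rw [← FPerm_symm_apply σ hσ, Equiv.symm_apply_apply]

lemma FPerm_last : FPerm σ hσ ⟨m, Nat.lt_succ_self m⟩ = 0 := by
  have := FPerm_posOf σ hσ 0
  rwa [posOf_zero] at this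

lemma minF_last : IsLMin (FPerm σ hσ) ⟨m, Nat.lt_succ_self m⟩ := by
  intro q hq
  rw [FPerm_last]
  apply Fin.pos_of_ne_zero
  intro hc
  have h2 : q = ⟨m, Nat.lt_succ_self m⟩ := by
    rw [← FPerm_last σ hσ] at hc
    exact (FPerm σ hσ).injective hc
  rw [h2] at hq
  exact absurd hq (lt_irrefl _)

lemma minF_low {x : Fin m} (hx : x ≤ σ x) :
    IsLMin (FPerm σ hσ) (posOf σ x.succ) := by
  intro q hq
  rw [FPerm_posOf]
  have hpw : posOf σ (FPerm σ hσ q) = q := posOf_FPerm σ hσ q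
  rw [posOf_succ_low σ hx] at hq
  have hqv : q.1 < cnt (⇑σ) x := hq
  generalize hw : FPerm σ hσ q = w at hpw ⊢
  induction w using Fin.cases with
  | zero =>
    exfalso
    rw [posOf_zero] at hpw
    have h1 : m = q.1 := congrArg Fin.val hpw
    have := cnt_lt (⇑σ) x
    omega
  | succ y =>
    rw [Fin.succ_lt_succ_iff]
    by_contra hc
    push_neg at hc
    rcases lt_or_eq_of_le hc with hyx | hyx
    · by_cases hy : y ≤ σ y
      · rw [posOf_succ_low σ hy] at hpw
        have h1 : cnt (⇑σ) y = q.1 := congrArg Fin.val hpw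
        have := cnt_strict σ hyx hx
        omega
      · push_neg at hy
        rw [posOf_succ_high σ (not_le_of_gt hy)] at hpw
        have h1 : cnt (⇑σ) (σ y) + 1 = q.1 := congrArg Fin.val hpw
        have h2 : σ y < x := lt_trans hy hyx
        have := cnt_strict σ h2 hx
        omega
    · rw [hyx, posOf_succ_low σ hx] at hpw
      have h1 : cnt (⇑σ) x = q.1 := congrArg Fin.val hpw
      omega

lemma nonminF_high {x : Fin m} (hx : σ x < x) :
    ¬ IsLMin (FPerm σ hσ) (posOf σ x.succ) := by
  intro hmin
  have hlow : σ x ≤ σ (σ x) := by rw [hσ]; exact le_of_lt hx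
  have hq : posOf σ (σ x).succ < posOf σ x.succ := by
    rw [posOf_succ_low σ hlow, posOf_succ_high σ (not_le_of_gt hx)]
    show cnt (⇑σ) (σ x) < cnt (⇑σ) (σ x) + 1
    omega
  have h1 := hmin _ hq
  rw [FPerm_posOf, FPerm_posOf, Fin.succ_lt_succ_iff] at h1
  exact absurd hx (not_lt_of_gt h1)

lemma valid_FPerm : Valid (FPerm σ hσ) := by
  refine ⟨FPerm_last σ hσ, ?_⟩
  intro p hp
  have hpv : posOf σ (FPerm σ hσ p) = p := posOf_FPerm σ hσ p
  generalize hv : FPerm σ hσ p = v at hpv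
  induction v using Fin.cases with
  | zero =>
    exfalso
    rw [posOf_zero] at hpv
    rw [← hpv] at hp
    exact hp (minF_last σ hσ)
  | succ y =>
    by_cases hy : y ≤ σ y
    · exfalso
      rw [← hpv] at hp
      exact hp (minF_low σ hσ hy)
    · push_neg at hy
      have hlow : σ y ≤ σ (σ y) := by rw [hσ]; exact le_of_lt hy
      have hmin := minF_low σ hσ hlow
      have hp1 : p.1 = cnt (⇑σ) (σ y) + 1 := by
        rw [← hpv, posOf_succ_high σ (not_le_of_gt hy)]
      have heq : (⟨p.1 - 1, lt_of_le_of_lt (Nat.sub_le _ _) p.isLt⟩ : Fin (m+1)) =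
          posOf σ (σ y).succ := by
        apply Fin.ext
        rw [posOf_succ_low σ hlow]
        show p.1 - 1 = cnt (⇑σ) (σ y)
        omega
      rw [heq]
      exact hmin


/-! ### From valid permutations to involutions -/

section Recon

variable (π : Equiv.Perm (Fin (m+1)))

def pr (x : Fin m) (v : Fin (m+1)) : Fin m :=
  ⟨v.1 - 1, by have h1 := v.isLt; have h2 := x.isLt; omega⟩

def qpos (x : Fin m) : Fin (m+1) :=
  ⟨min ((π.symm x.succ).1 + 1) m, Nat.lt_succ_of_le (Nat.min_le_right _ _)⟩

def rpos (x : Fin m) : Fin (m+1) :=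
  ⟨(π.symm x.succ).1 - 1, lt_of_le_of_lt (Nat.sub_le _ _) (π.symm x.succ).isLt⟩

/-- reconstruction of the involution from a valid permutation -/
def gfun (x : Fin m) : Fin m :=
  if IsLMin π (π.symm x.succ) then
    if IsLMin π (qpos π x) then x else pr x (π (qpos π x))
  else pr x (π (rpos π x))

variable {π}

lemma gfun_lowfix {x : Fin m} (h1 : IsLMin π (π.symm x.succ)) (h2 : IsLMin π (qpos π x)) :
    gfun π x = x := by unfold gfun; rw [if_pos h1, if_pos h2]

lemma gfun_lowpair {x : Fin m} (h1 : IsLMin π (π.symm x.succ)) (h2 : ¬ IsLMin π (qpos π x)) :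
    gfun π x = pr x (π (qpos π x)) := by unfold gfun; rw [if_pos h1, if_neg h2]

lemma gfun_high {x : Fin m} (h1 : ¬ IsLMin π (π.symm x.succ)) :
    gfun π x = pr x (π (rpos π x)) := by unfold gfun; rw [if_neg h1]

lemma pr_succ {x : Fin m} {v : Fin (m+1)} (h : v ≠ 0) : (pr x v).succ = v := by
  have h0 : v.1 ≠ 0 := fun hc => h (Fin.ext hc)
  apply Fin.ext
  show v.1 - 1 + 1 = v.1
  omega

lemma last_min (hv : Valid π) : IsLMin π ⟨m, Nat.lt_succ_self m⟩ := by
  intro q hq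
  rw [hv.1]
  apply Fin.pos_of_ne_zero
  intro hc
  have h2 : q = ⟨m, Nat.lt_succ_self m⟩ := π.injective (hc.trans hv.1.symm)
  rw [h2] at hq
  exact absurd hq (lt_irrefl _)

lemma val_ne_zero (hv : Valid π) {r : Fin (m+1)} (hr : r.1 ≠ m) : π r ≠ 0 := by
  intro hc
  exact hr (congrArg Fin.val (π.injective (hc.trans hv.1.symm)))

lemma symm_lt (hv : Valid π) (x : Fin m) : (π.symm x.succ).1 < m := by
  have h1 := (π.symm x.succ).isLt
  rcases Nat.lt_or_ge (π.symm x.succ).1 m with h | h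
  · exact h
  · exfalso
    have h2 : (π.symm x.succ) = ⟨m, Nat.lt_succ_self m⟩ :=
      Fin.ext (show (π.symm x.succ).1 = m by omega)
    have h3 := π.apply_symm_apply x.succ
    rw [h2, hv.1] at h3
    exact Fin.succ_ne_zero x h3.symm

lemma succ_nonmin_gt {p q : Fin (m+1)} (hp : IsLMin π p) (hq : ¬ IsLMin π q)
    (h : q.1 = p.1 + 1) : π p < π q := by
  unfold IsLMin at hq
  push_neg at hq
  obtain ⟨i, hiq, hile⟩ := hq
  have hi : π i < π q := lt_of_le_ne hile (ne_of_lt hiq)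
  rcases lt_trichotomy i p with hc | hc | hc
  · exact lt_trans (hp i hc) hi
  · rw [hc] at hi; exact hi
  · exfalso
    have h1 : i.1 < q.1 := hiq
    have h2 : p.1 < i.1 := hc
    omega

lemma pred_min_lt {r p : Fin (m+1)} (hr : IsLMin π r) (hp : ¬ IsLMin π p)
    (h : r.1 + 1 = p.1) : π r < π p := by
  unfold IsLMin at hp
  push_neg at hp
  obtain ⟨i, hip, hile⟩ := hp
  have hi : π i < π p := lt_of_le_ne hile (ne_of_lt hip)
  rcases lt_trichotomy i r with hc | hc | hc
  · exact lt_trans (hr i hc) hi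
  · rw [hc] at hi; exact hi
  · exfalso
    have h1 : i.1 < p.1 := hip
    have h2 : r.1 < i.1 := hc
    omega

lemma qpos_val (hv : Valid π) (x : Fin m) : (qpos π x).1 = (π.symm x.succ).1 + 1 := by
  have := symm_lt hv x
  show min ((π.symm x.succ).1 + 1) m = (π.symm x.succ).1 + 1
  omega

lemma low_iff (hv : Valid π) (x : Fin m) :
    IsLMin π (π.symm x.succ) ↔ x ≤ gfun π x := by
  have hplt : (π.symm x.succ).1 < m := symm_lt hv x
  constructor
  · intro hp
    by_cases hq : IsLMin π (qpos π x)
    · rw [gfun_lowfix hp hq]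
    · rw [gfun_lowpair hp hq]
      have hgt := succ_nonmin_gt hp hq (qpos_val hv x)
      rw [π.apply_symm_apply] at hgt
      have hval : x.1 + 1 < (π (qpos π x)).1 := hgt
      show x.1 ≤ (π (qpos π x)).1 - 1
      omega
  · intro hle
    by_contra hp
    rw [gfun_high hp] at hle
    have hp0 : (π.symm x.succ).1 ≠ 0 := fun hc => hp (min_of_val_zero hc)
    have hr : IsLMin π (rpos π x) := hv.2 _ hp
    have hlt := pred_min_lt hr hp (show (rpos π x).1 + 1 = (π.symm x.succ).1 by
      show (π.symm x.succ).1 - 1 + 1 = (π.symm x.succ).1; omega)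
    rw [π.apply_symm_apply] at hlt
    have hv1 : (π (rpos π x)).1 < x.1 + 1 := hlt
    have hrne : π (rpos π x) ≠ 0 := val_ne_zero hv (by
      show (π.symm x.succ).1 - 1 ≠ m; omega)
    have hrpos : 0 < (π (rpos π x)).1 := Fin.pos_of_ne_zero hrne
    have hle' : x.1 ≤ (π (rpos π x)).1 - 1 := hle
    omega

lemma ginv (hv : Valid π) (x : Fin m) : gfun π (gfun π x) = x := by
  have hplt : (π.symm x.succ).1 < m := symm_lt hv x
  by_cases h1 : IsLMin π (π.symm x.succ)
  · by_cases h2 : IsLMin π (qpos π x)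
    · rw [gfun_lowfix h1 h2, gfun_lowfix h1 h2]
    · rw [gfun_lowpair h1 h2]
      have hq0 : π (qpos π x) ≠ 0 := by
        apply val_ne_zero hv
        intro hc
        have : qpos π x = ⟨m, Nat.lt_succ_self m⟩ := Fin.ext hc
        rw [this] at h2
        exact h2 (last_min hv)
      have hys : (pr x (π (qpos π x))).succ = π (qpos π x) := pr_succ hq0
      have hsy : π.symm (pr x (π (qpos π x))).succ = qpos π x := by
        rw [hys, π.symm_apply_apply]
      have hny : ¬ IsLMin π (π.symm (pr x (π (qpos π x))).succ) := by
        rw [hsy]; exact h2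
      rw [gfun_high hny]
      have hrv : rpos π (pr x (π (qpos π x))) = π.symm x.succ := by
        apply Fin.ext
        show (π.symm (pr x (π (qpos π x))).succ).1 - 1 = (π.symm x.succ).1
        rw [hsy, qpos_val hv x]
        omega
      rw [hrv, π.apply_symm_apply]
      apply Fin.ext
      show x.1 + 1 - 1 = x.1
      omega
  · rw [gfun_high h1]
    have hp0 : (π.symm x.succ).1 ≠ 0 := fun hc => h1 (min_of_val_zero hc)
    have hr0 : π (rpos π x) ≠ 0 := val_ne_zero hv (by
      show (π.symm x.succ).1 - 1 ≠ m; omega)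
    have hys : (pr x (π (rpos π x))).succ = π (rpos π x) := pr_succ hr0
    have hsy : π.symm (pr x (π (rpos π x))).succ = rpos π x := by
      rw [hys, π.symm_apply_apply]
    have hminr : IsLMin π (rpos π x) := hv.2 _ h1
    have hy1 : IsLMin π (π.symm (pr x (π (rpos π x))).succ) := by rw [hsy]; exact hminr
    have hqy : qpos π (pr x (π (rpos π x))) = π.symm x.succ := by
      apply Fin.ext
      show min ((π.symm (pr x (π (rpos π x))).succ).1 + 1) m = (π.symm x.succ).1
      rw [hsy]
      show min ((π.symm x.succ).1 - 1 + 1) m = (π.symm x.succ).1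
      omega
    have hy2 : ¬ IsLMin π (qpos π (pr x (π (rpos π x)))) := by rw [hqy]; exact h1
    rw [gfun_lowpair hy1 hy2, hqy, π.apply_symm_apply]
    apply Fin.ext
    show x.1 + 1 - 1 = x.1
    omega

lemma pos_lowC (hv : Valid π) {x : Fin m} (hx : IsLMin π (π.symm x.succ)) :
    (π.symm x.succ).1 = cnt (gfun π) x := by
  have hplt : (π.symm x.succ).1 < m := symm_lt hv x
  have hm : 0 < m := x.pos
  have hkey : (Finset.Iio (π.symm x.succ)).card
      = (univ.filter fun z => x < z ∧ x < gfun π z).card := by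
    apply Finset.card_bij (fun q _ => pr x (π q))
    · intro q hq
      rw [Finset.mem_Iio] at hq
      have hqv : q.1 < (π.symm x.succ).1 := hq
      have hq0 : π q ≠ 0 := val_ne_zero hv (by omega)
      have hgt : x.succ < π q := by
        have := hx q hq
        rwa [π.apply_symm_apply] at this
      have hgtv : x.1 + 1 < (π q).1 := hgt
      have hz1 : x < pr x (π q) := by
        show x.1 < (π q).1 - 1
        omega
      have hzs : (pr x (π q)).succ = π q := pr_succ hq0
      have hsymm : π.symm (pr x (π q)).succ = q := by rw [hzs, π.symm_apply_apply]
      have hz2 : x < gfun π (pr x (π q)) := by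
        by_cases hmq : IsLMin π q
        · have hlow : IsLMin π (π.symm (pr x (π q)).succ) := by rw [hsymm]; exact hmq
          exact lt_of_lt_of_le hz1 ((low_iff hv _).1 hlow)
        · have hhigh : ¬ IsLMin π (π.symm (pr x (π q)).succ) := by rw [hsymm]; exact hmq
          rw [gfun_high hhigh]
          have hrval : (rpos π (pr x (π q))).1 = q.1 - 1 := by
            show (π.symm (pr x (π q)).succ).1 - 1 = q.1 - 1
            rw [hsymm]
          have hrlt : rpos π (pr x (π q)) < π.symm x.succ := by
            show (rpos π (pr x (π q))).1 < (π.symm x.succ).1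
            omega
          have hgt2 := hx _ hrlt
          rw [π.apply_symm_apply] at hgt2
          have hgt2v : x.1 + 1 < (π (rpos π (pr x (π q)))).1 := hgt2
          show x.1 < (π (rpos π (pr x (π q)))).1 - 1
          omega
      exact mem_filter.2 ⟨mem_univ _, hz1, hz2⟩
    · intro q1 h1 q2 h2 heq
      rw [Finset.mem_Iio] at h1 h2
      have h1v : q1.1 < (π.symm x.succ).1 := h1
      have h2v : q2.1 < (π.symm x.succ).1 := h2
      have hq10 : π q1 ≠ 0 := val_ne_zero hv (by omega)
      have hq20 : π q2 ≠ 0 := val_ne_zero hv (by omega)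
      have hp1 : 0 < (π q1).1 := Fin.pos_of_ne_zero hq10
      have hp2 : 0 < (π q2).1 := Fin.pos_of_ne_zero hq20
      have hval : (π q1).1 - 1 = (π q2).1 - 1 := congrArg Fin.val heq
      have : π q1 = π q2 := Fin.ext (by omega)
      exact π.injective this
    · intro z hz
      rw [mem_filter] at hz
      obtain ⟨-, hz1, hz2⟩ := hz
      refine ⟨π.symm z.succ, ?_, ?_⟩
      · rw [Finset.mem_Iio]
        have hne : π.symm z.succ ≠ π.symm x.succ := by
          intro hc
          have := π.symm.injective hc
          have h3 : z.1 + 1 = x.1 + 1 := congrArg Fin.val this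
          have h4 : x.1 < z.1 := hz1
          omega
        rcases lt_or_gt_of_ne hne with hc | hc
        · exact hc
        · exfalso
          by_cases hmq : IsLMin π (π.symm z.succ)
          · have := hmq _ hc
            rw [π.apply_symm_apply, π.apply_symm_apply] at this
            have h3 : z.1 + 1 < x.1 + 1 := this
            have h4 : x.1 < z.1 := hz1
            omega
          · have hq0 : (π.symm z.succ).1 ≠ 0 := fun hcc => hmq (min_of_val_zero hcc)
            have hminr : IsLMin π (rpos π z) := hv.2 _ hmq
            have hcv : (π.symm x.succ).1 < (π.symm z.succ).1 := hc
            have hzlt := symm_lt hv z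
            rw [gfun_high hmq] at hz2
            rcases eq_or_lt_of_le (show (π.symm x.succ).1 ≤ (π.symm z.succ).1 - 1 by omega)
              with hcc | hcc
            · have : rpos π z = π.symm x.succ := Fin.ext (by
                show (π.symm z.succ).1 - 1 = (π.symm x.succ).1; omega)
              rw [this, π.apply_symm_apply] at hz2
              have : x.1 < x.1 + 1 - 1 := hz2
              omega
            · have hlt2 : π.symm x.succ < rpos π z := by
                show (π.symm x.succ).1 < (π.symm z.succ).1 - 1
                exact hcc
              have := hminr _ hlt2
              rw [π.apply_symm_apply] at this
              have h3 : (π (rpos π z)).1 < x.1 + 1 := this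
              have h4 : x.1 < (π (rpos π z)).1 - 1 := hz2
              omega
      · rw [π.apply_symm_apply]
        apply Fin.ext
        show z.1 + 1 - 1 = z.1
        omega
  rw [Fin.card_Iio] at hkey
  exact hkey

lemma pos_highC (hv : Valid π) {x : Fin m} (hx : ¬ IsLMin π (π.symm x.succ)) :
    (π.symm x.succ).1 = cnt (gfun π) (gfun π x) + 1 := by
  have hp0 : (π.symm x.succ).1 ≠ 0 := fun hc => hx (min_of_val_zero hc)
  have hplt : (π.symm x.succ).1 < m := symm_lt hv x
  have hr0 : π (rpos π x) ≠ 0 := val_ne_zero hv (by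
    show (π.symm x.succ).1 - 1 ≠ m; omega)
  have hgf : gfun π x = pr x (π (rpos π x)) := gfun_high hx
  have hys : (pr x (π (rpos π x))).succ = π (rpos π x) := pr_succ hr0
  have hsy : π.symm (pr x (π (rpos π x))).succ = rpos π x := by
    rw [hys, π.symm_apply_apply]
  have hminr : IsLMin π (rpos π x) := hv.2 _ hx
  have hlow : IsLMin π (π.symm (pr x (π (rpos π x))).succ) := by rw [hsy]; exact hminr
  have := pos_lowC hv hlow
  rw [hsy] at this
  have hrv : (rpos π x).1 = (π.symm x.succ).1 - 1 := rfl
  rw [hgf]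
  omega

end Recon


/-! ### The composition identities and the final equivalence -/

noncomputable def GPerm (π : Equiv.Perm (Fin (m+1))) (hv : Valid π) : Equiv.Perm (Fin m) :=
  Function.Involutive.toPerm (gfun π) (fun x => ginv hv x)

lemma GPerm_apply (π : Equiv.Perm (Fin (m+1))) (hv : Valid π) (x : Fin m) :
    GPerm π hv x = gfun π x := rfl

lemma GPerm_invol (π : Equiv.Perm (Fin (m+1))) (hv : Valid π) (x : Fin m) :
    GPerm π hv (GPerm π hv x) = x := ginv hv x

lemma left_identity (π : Equiv.Perm (Fin (m+1))) (hv : Valid π) :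
    FPerm (GPerm π hv) (GPerm_invol π hv) = π := by
  have hsymm : ∀ v, posOf (GPerm π hv) v = π.symm v := by
    intro v
    induction v using Fin.cases with
    | zero =>
      rw [posOf_zero]
      have : π.symm 0 = ⟨m, Nat.lt_succ_self m⟩ := by
        rw [← hv.1, π.symm_apply_apply]
      rw [this]
    | succ x =>
      by_cases hx : x ≤ GPerm π hv x
      · rw [posOf_succ_low _ hx]
        have hmin : IsLMin π (π.symm x.succ) := (low_iff hv x).2 hx
        have := pos_lowC hv hmin
        exact (Fin.ext this).symm
      · rw [posOf_succ_high _ hx]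
        push_neg at hx
        have hnm : ¬ IsLMin π (π.symm x.succ) := by
          intro hc
          exact absurd ((low_iff hv x).1 hc) (not_le_of_gt hx)
        have := pos_highC hv hnm
        exact (Fin.ext this).symm
  have hsymm2 : (FPerm (GPerm π hv) (GPerm_invol π hv)).symm = π.symm := by
    apply Equiv.ext
    intro v
    rw [FPerm_symm_apply]
    exact hsymm v
  calc FPerm (GPerm π hv) (GPerm_invol π hv)
      = ((FPerm (GPerm π hv) (GPerm_invol π hv)).symm).symm := (Equiv.symm_symm _).symm
    _ = (π.symm).symm := by rw [hsymm2]
    _ = π := Equiv.symm_symm π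

lemma right_identity (σ : Equiv.Perm (Fin m)) (hσ : ∀ x, σ (σ x) = x) (x : Fin m) :
    gfun (FPerm σ hσ) x = σ x := by
  have hsps : (FPerm σ hσ).symm x.succ = posOf σ x.succ := FPerm_symm_apply σ hσ x.succ
  rcases lt_trichotomy x (σ x) with hx | hx | hx
  · -- x is the smaller of a pair
    have hxle : x ≤ σ x := le_of_lt hx
    have hmin : IsLMin (FPerm σ hσ) ((FPerm σ hσ).symm x.succ) := by
      rw [hsps]; exact minF_low σ hσ hxle
    have hplow : ((FPerm σ hσ).symm x.succ).1 = cnt (⇑σ) x := by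
      rw [hsps, posOf_succ_low σ hxle]
    have hσx_high : ¬ (σ x ≤ σ (σ x)) := by rw [hσ]; exact not_le_of_gt hx
    have hq_eq : qpos (FPerm σ hσ) x = posOf σ (σ x).succ := by
      apply Fin.ext
      rw [posOf_succ_high σ hσx_high]
      show min (((FPerm σ hσ).symm x.succ).1 + 1) m = cnt (⇑σ) (σ (σ x)) + 1
      rw [hplow, hσ]
      have := cnt_lt (⇑σ) x
      omega
    have hnq : ¬ IsLMin (FPerm σ hσ) (qpos (FPerm σ hσ) x) := by
      rw [hq_eq]
      exact nonminF_high σ hσ (show σ (σ x) < σ x by rw [hσ]; exact hx)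
    rw [gfun_lowpair hmin hnq, hq_eq, FPerm_posOf]
    apply Fin.ext
    show (σ x).1 + 1 - 1 = (σ x).1
    omega
  · -- fixed point
    have hxle : x ≤ σ x := le_of_eq hx
    have hmin : IsLMin (FPerm σ hσ) ((FPerm σ hσ).symm x.succ) := by
      rw [hsps]; exact minF_low σ hσ hxle
    have hplow : ((FPerm σ hσ).symm x.succ).1 = cnt (⇑σ) x := by
      rw [hsps, posOf_succ_low σ hxle]
    have hcx := cnt_lt (⇑σ) x
    have hqval : (qpos (FPerm σ hσ) x).1 = cnt (⇑σ) x + 1 := by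
      show min (((FPerm σ hσ).symm x.succ).1 + 1) m = cnt (⇑σ) x + 1
      rw [hplow]
      omega
    have hminq : IsLMin (FPerm σ hσ) (qpos (FPerm σ hσ) x) := by
      have hpw : posOf σ (FPerm σ hσ (qpos (FPerm σ hσ) x)) = qpos (FPerm σ hσ) x :=
        posOf_FPerm σ hσ _
      generalize hw : FPerm σ hσ (qpos (FPerm σ hσ) x) = w at hpw
      induction w using Fin.cases with
      | zero =>
        rw [posOf_zero] at hpw
        rw [← hpw]
        exact minF_last σ hσ
      | succ y =>
        by_cases hy : y ≤ σ y
        · rw [← hpw]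
          exact minF_low σ hσ hy
        · exfalso
          push_neg at hy
          rw [posOf_succ_high σ (not_le_of_gt hy)] at hpw
          have hval : cnt (⇑σ) (σ y) + 1 = cnt (⇑σ) x + 1 := by
            have := congrArg Fin.val hpw
            rw [hqval] at this
            exact this
          have hylow : σ y ≤ σ (σ y) := by rw [hσ]; exact le_of_lt hy
          have heq2 := cnt_inj σ hylow hxle (by omega)
          have : y = σ x := by rw [← hσ y, heq2]
          rw [← hx] at this
          rw [this] at hy
          rw [← hx] at hy
          exact absurd hy (lt_irrefl _)
    rw [gfun_lowfix hmin hminq]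
    exact hx
  · -- x is the larger of a pair
    have hσlow : σ x ≤ σ (σ x) := by rw [hσ]; exact le_of_lt hx
    have hnm : ¬ IsLMin (FPerm σ hσ) ((FPerm σ hσ).symm x.succ) := by
      rw [hsps]; exact nonminF_high σ hσ hx
    have hphigh : ((FPerm σ hσ).symm x.succ).1 = cnt (⇑σ) (σ x) + 1 := by
      rw [hsps, posOf_succ_high σ (not_le_of_gt hx)]
    have hr_eq : rpos (FPerm σ hσ) x = posOf σ (σ x).succ := by
      apply Fin.ext
      rw [posOf_succ_low σ hσlow]
      show (((FPerm σ hσ).symm x.succ)).1 - 1 = cnt (⇑σ) (σ x)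
      rw [hphigh]
      omega
    rw [gfun_high hnm, hr_eq, FPerm_posOf]
    apply Fin.ext
    show (σ x).1 + 1 - 1 = (σ x).1
    omega

lemma mul_self_iff (σ : Equiv.Perm (Fin m)) : σ * σ = 1 ↔ ∀ x, σ (σ x) = x := by
  constructor
  · intro h x
    have := Equiv.ext_iff.1 h x
    rwa [Equiv.Perm.mul_apply, Equiv.Perm.one_apply] at this
  · intro h
    apply Equiv.ext
    intro x
    rw [Equiv.Perm.mul_apply, Equiv.Perm.one_apply]
    exact h x

noncomputable def mainEquiv :
    {π : Equiv.Perm (Fin (m+1)) // Valid π} ≃ {σ : Equiv.Perm (Fin m) // σ * σ = 1} where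
  toFun π := ⟨GPerm π.1 π.2, (mul_self_iff _).2 (GPerm_invol π.1 π.2)⟩
  invFun σ := ⟨FPerm σ.1 ((mul_self_iff _).1 σ.2), valid_FPerm σ.1 _⟩
  left_inv π := Subtype.ext (by
    simp only []
    exact left_identity π.1 π.2)
  right_inv σ := Subtype.ext (by
    simp only []
    apply Equiv.ext
    intro x
    exact right_identity σ.1 _ x)

end CE

theorem count_ending_one (n : ℕ) (hn : 1 ≤ n) :
    Nat.card {π : Equiv.Perm (Fin n) // Avoids1d23 π ∧ Avoids1d32 π ∧
      π ⟨n - 1, by omega⟩ = ⟨0, by omega⟩} = invCount (n - 1) := by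
  obtain ⟨m, rfl⟩ : ∃ m, n = m + 1 := ⟨n - 1, by omega⟩
  have hinv : invCount (m + 1 - 1) = invCount m := by norm_num
  rw [hinv]
  unfold invCount
  apply Nat.card_congr
  refine Equiv.trans (Equiv.subtypeEquivRight ?_) CE.mainEquiv
  intro π
  have hidx : (⟨m + 1 - 1, by omega⟩ : Fin (m+1)) = ⟨m, Nat.lt_succ_self m⟩ :=
    Fin.ext (show m + 1 - 1 = m by omega)
  have hzero : (⟨0, by omega⟩ : Fin (m+1)) = 0 := Fin.ext (by simp)
  rw [hidx, hzero]
  unfold CE.Valid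
  constructor
  · rintro ⟨h1, h2, h3⟩
    exact ⟨h3, (CE.char π).1 ⟨h1, h2⟩⟩
  · rintro ⟨h1, h2⟩
    obtain ⟨a, b⟩ := (CE.char π).2 h2
    exact ⟨a, b, h1⟩
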